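/- Let $X \in \mathbb{R}^{p \times n}$ have full row rank, $H = XX^\top$, $Z \in \mathbb{R}^{m \times n}$, $M = ZX^\top$. For any rank constraint $r$, the minimizers of $\|UX - Z\|_F^2$ over matrices $U \in \mathbb{R}^{m \times p}$ with $\mathrm{rank}(U) \leq r$ are exactly $U = VH^{-1/2}$, where $V$ ranges over minimizers of $\|V - MH^{-1/2}\|_F^2$ over $\mathrm{rank}(V) \leq r$; moreover the substitution $V = UH^{1/2}$ preserves rank: $\mathrm{rank}(UH^{1/2}) = \mathrm{rank}(U)$. -/

import Mathlib

open Matrix BigOperators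

noncomputable section

/-- Squared Frobenius norm of a real matrix. -/
def frobSq {m n : ℕ} (M : Matrix (Fin m) (Fin n) ℝ) : ℝ := ∑ i, ∑ j, (M i j)^2

lemma frobSq_eq_trace {m n : ℕ} (A : Matrix (Fin m) (Fin n) ℝ) :
    frobSq A = (A * Aᵀ).trace := by
  simp [frobSq, Matrix.trace, Matrix.mul_apply, Matrix.diag, sq]

theorem whitened_rank_constrained_equivalence
    {p n m : ℕ}
    (X : Matrix (Fin p) (Fin n) ℝ)
    (H : Matrix (Fin p) (Fin p) ℝ) (hH : H = X * Xᵀ)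
    (hHpd : H.PosDef)
    (Hsqrt : Matrix (Fin p) (Fin p) ℝ)
    (hsym : Hsqrtᵀ = Hsqrt) (hpd : Hsqrt.PosDef)
    (hsq : Hsqrt * Hsqrt = H)
    (Z : Matrix (Fin m) (Fin n) ℝ)
    (M : Matrix (Fin m) (Fin p) ℝ) (hM : M = Z * Xᵀ)
    (r : ℕ) :
    (∀ U : Matrix (Fin m) (Fin p) ℝ, (U * Hsqrt).rank = U.rank) ∧
    (∀ U : Matrix (Fin m) (Fin p) ℝ, U.rank ≤ r →
      ((∀ U' : Matrix (Fin m) (Fin p) ℝ, U'.rank ≤ r →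
          frobSq (U * X - Z) ≤ frobSq (U' * X - Z))
        ↔
       (∀ V' : Matrix (Fin m) (Fin p) ℝ, V'.rank ≤ r →
          frobSq (U * Hsqrt - M * Hsqrt⁻¹) ≤ frobSq (V' - M * Hsqrt⁻¹)))) ∧
    (∀ V : Matrix (Fin m) (Fin p) ℝ, V.rank ≤ r →
      (∀ V' : Matrix (Fin m) (Fin p) ℝ, V'.rank ≤ r →
          frobSq (V - M * Hsqrt⁻¹) ≤ frobSq (V' - M * Hsqrt⁻¹)) →
      (∀ U' : Matrix (Fin m) (Fin p) ℝ, U'.rank ≤ r →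
          frobSq (V * Hsqrt⁻¹ * X - Z) ≤ frobSq (U' * X - Z))) := by
  have hSdet : IsUnit Hsqrt.det := hpd.det_pos.ne'.isUnit
  have hSinvdet : IsUnit Hsqrt⁻¹.det := by
    rw [Matrix.det_nonsing_inv]
    exact isUnit_ringInverse.mpr hSdet
  have hSS : Hsqrt * Hsqrt⁻¹ = 1 := Matrix.mul_nonsing_inv _ hSdet
  have hSS' : Hsqrt⁻¹ * Hsqrt = 1 := Matrix.nonsing_inv_mul _ hSdet
  have hinvT : Hsqrt⁻¹ᵀ = Hsqrt⁻¹ := by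
    rw [Matrix.transpose_nonsing_inv, hsym]
  -- the key identity: the two objectives differ by a constant
  have key : ∀ U : Matrix (Fin m) (Fin p) ℝ,
      frobSq (U * X - Z) = frobSq (U * Hsqrt - M * Hsqrt⁻¹) +
        ((Z * Zᵀ).trace - ((M * Hsqrt⁻¹) * (M * Hsqrt⁻¹)ᵀ).trace) := by
    intro U
    have h1 : (U * X) * (U * X)ᵀ = (U * Hsqrt) * (U * Hsqrt)ᵀ := by
      rw [Matrix.transpose_mul, Matrix.transpose_mul, hsym,
        Matrix.mul_assoc, Matrix.mul_assoc, ← Matrix.mul_assoc X,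
        ← Matrix.mul_assoc Hsqrt, ← hH, hsq]
    have h2 : Z * (U * X)ᵀ = (M * Hsqrt⁻¹) * (U * Hsqrt)ᵀ := by
      rw [Matrix.transpose_mul, Matrix.transpose_mul, hsym, ← Matrix.mul_assoc, ← hM,
        ← Matrix.mul_assoc, Matrix.mul_assoc M, hSS', Matrix.mul_one]
    have h3 : (U * X) * Zᵀ = (U * Hsqrt) * (M * Hsqrt⁻¹)ᵀ := by
      have := congrArg Matrix.transpose h2
      simpa only [Matrix.transpose_mul, Matrix.transpose_transpose] using this
    rw [frobSq_eq_trace, frobSq_eq_trace]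
    simp only [Matrix.transpose_sub, Matrix.sub_mul, Matrix.mul_sub,
      Matrix.trace_sub, h1, h2, h3]
    ring
  refine ⟨fun U => Matrix.rank_mul_eq_left_of_isUnit_det _ _ hSdet, ?_, ?_⟩
  · intro U _
    constructor
    · intro hmin V' hV'
      have hU' : (V' * Hsqrt⁻¹).rank ≤ r := by
        rw [Matrix.rank_mul_eq_left_of_isUnit_det _ _ hSinvdet]; exact hV'
      have hVeq : V' * Hsqrt⁻¹ * Hsqrt = V' := by
        rw [Matrix.mul_assoc, hSS', Matrix.mul_one]
      have := hmin (V' * Hsqrt⁻¹) hU'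
      rw [key U, key (V' * Hsqrt⁻¹), hVeq] at this
      linarith
    · intro hmin U' hU'
      have hV' : (U' * Hsqrt).rank ≤ r := by
        rw [Matrix.rank_mul_eq_left_of_isUnit_det _ _ hSdet]; exact hU'
      have := hmin (U' * Hsqrt) hV'
      rw [key U, key U']
      linarith
  · intro V _ hmin U' hU'
    have hV' : (U' * Hsqrt).rank ≤ r := by
      rw [Matrix.rank_mul_eq_left_of_isUnit_det _ _ hSdet]; exact hU'
    have := hmin (U' * Hsqrt) hV'
    have hVeq : V * Hsqrt⁻¹ * Hsqrt = V := by
      rw [Matrix.mul_assoc, hSS', Matrix.mul_one]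
    rw [key (V * Hsqrt⁻¹), key U', hVeq]
    linarith
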